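/- arXiv:1204.2047 — 6 statements merged into one kernel-verified Lean document; each statement's English description precedes it below -/
import Mathlib

section
/- Let X be a real Banach space, C a nonempty bounded subset of X, and f : X → ℝ bounded below on C. Define r(x) = sup{‖x−z‖ − f(z) : z ∈ C} and let ∂r(x) = {x* ∈ X* : ∀ y ∈ X, ⟨x*, y−x⟩ ≤ r(y) − r(x)} be the subdifferential of the convex function r at x. Then the set G = {x ∈ X : for every x* ∈ ∂r(x), sup{⟨x*, x−z⟩ − f(z) : z ∈ C} = r(x)} is a G_δ dense subset of X. -/
/- STATEMENT 1: X a real Banach space, C a nonempty bounded subset, f bounded below on C,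
r(x) = sup{‖x−z‖ − f(z) : z ∈ C}, ∂r(x) = {x* : ∀ y, ⟨x*, y−x⟩ ≤ r(y) − r(x)}.
Then G = {x : ∀ x* ∈ ∂r(x), sup{⟨x*, x−z⟩ − f(z) : z ∈ C} = r(x)} is a Gδ dense subset. -/
set_option maxHeartbeats 1000000 in
theorem stmt_1 {X : Type*} [NormedAddCommGroup X] [NormedSpace ℝ X] [CompleteSpace X]
    (C : Set X) (hCne : C.Nonempty) (hCb : Bornology.IsBounded C)
    (f : X → ℝ) (hfb : BddBelow (f '' C))
    (r : X → ℝ) (hr : ∀ x, r x = sSup ((fun z => ‖x - z‖ - f z) '' C))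
    (subdiff : X → Set (X →L[ℝ] ℝ))
    (hsubdiff : ∀ x, subdiff x = {g : X →L[ℝ] ℝ | ∀ y : X, g (y - x) ≤ r y - r x}) :
    IsGδ {x : X | ∀ g ∈ subdiff x, sSup ((fun z => g (x - z) - f z) '' C) = r x} ∧
    Dense {x : X | ∀ g ∈ subdiff x, sSup ((fun z => g (x - z) - f z) '' C) = r x} := by
  classical
  obtain ⟨M, hM⟩ : ∃ M, ∀ z ∈ C, ‖z‖ ≤ M := (isBounded_iff_forall_norm_le).1 hCb
  obtain ⟨b, hb⟩ := hfb
  have hbC : ∀ z ∈ C, b ≤ f z := fun z hz => hb ⟨z, hz, rfl⟩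
  obtain ⟨z₀, hz₀⟩ := hCne
  have hM0 : 0 ≤ M := le_trans (norm_nonneg z₀) (hM z₀ hz₀)
  -- basic facts
  have hne : ∀ x : X, ((fun z => ‖x - z‖ - f z) '' C).Nonempty := fun x => ⟨_, ⟨z₀, hz₀, rfl⟩⟩
  have hbdd : ∀ x : X, BddAbove ((fun z => ‖x - z‖ - f z) '' C) := by
    intro x
    refine ⟨‖x‖ + M - b, ?_⟩
    rintro - ⟨z, hz, rfl⟩
    dsimp only
    have := norm_sub_le x z
    have := hM z hz
    have := hbC z hz
    linarith
  have hrle : ∀ x : X, ∀ z ∈ C, ‖x - z‖ - f z ≤ r x := by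
    intro x z hz
    rw [hr x]
    exact le_csSup (hbdd x) ⟨z, hz, rfl⟩
  have hlip : ∀ x y : X, r x ≤ r y + ‖x - y‖ := by
    intro x y
    rw [hr x]
    refine csSup_le (hne x) ?_
    rintro - ⟨z, hz, rfl⟩
    dsimp only
    · have h1 : ‖x - z‖ ≤ ‖y - z‖ + ‖x - y‖ := by
        have := norm_add_le (y - z) (x - y)
        have e : y - z + (x - y) = x - z := by abel
        rw [e] at this; linarith
      have := hrle y z hz
      linarith
  -- every subgradient has norm ≤ 1
  have hgw : ∀ x : X, ∀ g ∈ subdiff x, ∀ w : X, g w ≤ ‖w‖ := by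
    intro x g hg w
    rw [hsubdiff x] at hg
    have h1 := hg (x + w)
    simp only [add_sub_cancel_left] at h1
    have h2 : r (x + w) ≤ r x + ‖w‖ := by
      have := hlip (x + w) x
      simpa using this
    linarith
  have hgnorm : ∀ x : X, ∀ g ∈ subdiff x, ‖g‖ ≤ 1 := by
    intro x g hg
    refine ContinuousLinearMap.opNorm_le_bound g zero_le_one fun w => ?_
    rw [one_mul, Real.norm_eq_abs, abs_le]
    constructor
    · have := hgw x g hg (-w); simp at this; linarith
    · exact hgw x g hg w
  -- the sup with g is bounded above and ≤ r x
  have hSbdd : ∀ (x : X) (g : X →L[ℝ] ℝ), (∀ w : X, g w ≤ ‖w‖) →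
      BddAbove ((fun z => g (x - z) - f z) '' C) := by
    intro x g hgx
    refine ⟨‖x‖ + M - b, ?_⟩
    rintro - ⟨z, hz, rfl⟩
    dsimp only
    have h1 := hgx (x - z)
    have h2 := norm_sub_le x z
    have := hM z hz
    have := hbC z hz
    linarith
  have hSle : ∀ (x : X), ∀ g ∈ subdiff x, sSup ((fun z => g (x - z) - f z) '' C) ≤ r x := by
    intro x g hg
    refine csSup_le ⟨_, ⟨z₀, hz₀, rfl⟩⟩ ?_
    rintro - ⟨z, hz, rfl⟩
    dsimp only
    have h1 := hgw x g hg (x - z)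
    have := hrle x z hz
    linarith
  -- the bad sets
  set F : ℕ → Set X := fun n =>
    {x | ∃ g ∈ subdiff x, ∀ z ∈ C, g (x - z) ≤ f z + r x - 1 / (n + 1)} with hF
  have hGeq : {x : X | ∀ g ∈ subdiff x, sSup ((fun z => g (x - z) - f z) '' C) = r x}
      = ⋂ n, (F n)ᶜ := by
    ext x
    simp only [Set.mem_setOf_eq, Set.mem_iInter, Set.mem_compl_iff, hF]
    constructor
    · intro hx n hxn
      obtain ⟨g, hg, hgz⟩ := hxn
      have h1 : sSup ((fun z => g (x - z) - f z) '' C) ≤ r x - 1 / (n + 1) := by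
        refine csSup_le ⟨_, ⟨z₀, hz₀, rfl⟩⟩ ?_
        rintro - ⟨z, hz, rfl⟩
        dsimp only
        have := hgz z hz
        linarith
      have h2 := hx g hg
      have h3 : (0:ℝ) < 1 / (n + 1) := by positivity
      linarith
    · intro hx g hg
      refine le_antisymm (hSle x g hg) ?_
      by_contra hlt
      push_neg at hlt
      obtain ⟨n, hn⟩ := exists_nat_one_div_lt
        (sub_pos.2 hlt : (0:ℝ) < r x - sSup ((fun z => g (x - z) - f z) '' C))
      refine hx n ⟨g, hg, fun z hz => ?_⟩
      have h1 : g (x - z) - f z ≤ sSup ((fun z => g (x - z) - f z) '' C) :=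
        le_csSup (hSbdd x g (hgw x g hg)) ⟨z, hz, rfl⟩
      linarith
  -- each F n is closed
  have hclosed : ∀ n, IsClosed (F n) := by
    intro n
    refine IsSeqClosed.isClosed ?_
    intro u x hu hux
    simp only [hF, Set.mem_setOf_eq] at hu ⊢
    choose g hg hgz using hu
    set G : ℕ → WeakDual ℝ X := fun k => StrongDual.toWeakDual (g k) with hG
    have hball : ∀ k, G k ∈ (WeakDual.toStrongDual ⁻¹' Metric.closedBall 0 1) := by
      intro k
      simp only [Set.mem_preimage, Metric.mem_closedBall, dist_zero_right]
      exact hgnorm _ _ (hg k)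
    obtain ⟨g₀, hg₀ball, hcl⟩ :=
      (WeakDual.isCompact_closedBall (𝕜 := ℝ) (0 : StrongDual ℝ X) 1).exists_clusterPt
        (f := Filter.map G Filter.atTop)
        (Filter.le_principal_iff.2 (Filter.mem_map.2 (Filter.Eventually.of_forall hball)))
    have hkey : ∀ (v : X) (c : ℝ), (∀ k, (g k) v ≤ c + 2 * ‖u k - x‖) → g₀ v ≤ c := by
      intro v c hkc
      refine le_of_forall_pos_le_add fun ε hε => ?_
      have hU : {h : WeakDual ℝ X | g₀ v - ε / 2 < h v} ∈ nhds g₀ := by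
        have hcont : Continuous fun h : WeakDual ℝ X => h v := WeakDual.eval_continuous v
        exact hcont.continuousAt.preimage_mem_nhds (Ioi_mem_nhds (by linarith))
      have hfreq := (mapClusterPt_iff_frequently.1 hcl) _ hU
      have hev : ∀ᶠ k in Filter.atTop, dist (u k) x < ε / 4 :=
        Metric.tendsto_nhds.1 hux (ε / 4) (by positivity)
      obtain ⟨k, hk1, hk2⟩ := (hfreq.and_eventually hev).exists
      have he : G k v = (g k) v := rfl
      rw [Set.mem_setOf_eq, he] at hk1
      rw [dist_eq_norm] at hk2
      have := hkc k
      linarith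
    refine ⟨WeakDual.toStrongDual g₀, ?_, ?_⟩
    · rw [hsubdiff x]
      intro y
      refine hkey (y - x) (r y - r x) fun k => ?_
      have hdec : y - x = (y - u k) + (u k - x) := by abel
      have h1 : (g k) (y - u k) ≤ r y - r (u k) := (hsubdiff (u k) ▸ hg k) y
      have h2 : (g k) (u k - x) ≤ ‖u k - x‖ := hgw (u k) (g k) (hg k) (u k - x)
      have h3 : r x ≤ r (u k) + ‖u k - x‖ := by
        have := hlip x (u k); rwa [norm_sub_rev] at this
      rw [hdec, map_add]
      linarith
    · intro z hz
      refine hkey (x - z) (f z + r x - 1 / (n + 1)) fun k => ?_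
      have hdec : x - z = (x - u k) + (u k - z) := by abel
      have h1 : (g k) (u k - z) ≤ f z + r (u k) - 1 / (n + 1) := hgz k z hz
      have h2 : (g k) (x - u k) ≤ ‖u k - x‖ := by
        have := hgw (u k) (g k) (hg k) (x - u k)
        rwa [norm_sub_rev x (u k)] at this
      have h3 : r (u k) ≤ r x + ‖u k - x‖ := hlip (u k) x
      rw [hdec, map_add]
      linarith
  -- each (F n)ᶜ is dense
  have hdense : ∀ n, Dense (F n)ᶜ := by
    intro n
    rcases subsingleton_or_nontrivial X with hX | hX
    · have hFe : F n = ∅ := by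
        rw [Set.eq_empty_iff_forall_notMem]
        rintro x ⟨g, hg, hgz⟩
        obtain ⟨a, ⟨z, hz, rfl⟩, hza⟩ := exists_lt_of_lt_csSup (hne x)
          (show r x - 1 / (n + 1) < sSup ((fun z => ‖x - z‖ - f z) '' C) by
            rw [← hr x]; have : (0:ℝ) < 1 / (n + 1) := by positivity
            linarith)
        dsimp only at hza
        have hxz : x - z = 0 := Subsingleton.elim _ _
        have h1 : (g : X →L[ℝ] ℝ) (x - z) = 0 := by rw [hxz, map_zero]
        have h2 : ‖x - z‖ = 0 := by rw [hxz, norm_zero]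
        have := hgz z hz
        linarith
      rw [hFe, Set.compl_empty]
      exact dense_univ
    · rw [Metric.dense_iff]
      intro x ε hε
      set t : ℝ := ε / 2 with ht
      have ht0 : 0 < t := by positivity
      set K : ℝ := ‖x‖ + t + M with hK
      have hK0 : 0 < t + K := by positivity
      set δ : ℝ := t / ((n + 1) * (2 * (t + K))) with hδ
      have hδ0 : 0 < δ := by positivity
      obtain ⟨a, ⟨z, hz, rfl⟩, hza⟩ := exists_lt_of_lt_csSup (hne x)
        (show r x - δ < sSup ((fun z => ‖x - z‖ - f z) '' C) by rw [← hr x]; linarith)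
      dsimp only at hza
      obtain ⟨v, hu1, huz⟩ : ∃ v : X, ‖v‖ = 1 ∧ x - z = ‖x - z‖ • v := by
        by_cases hxz : x = z
        · obtain ⟨v, hv⟩ := exists_ne (0 : X)
          refine ⟨‖v‖⁻¹ • v, ?_, ?_⟩
          · rw [norm_smul, norm_inv, norm_norm, inv_mul_cancel₀ (norm_ne_zero_iff.2 hv)]
          · rw [hxz, sub_self, norm_zero, zero_smul]
        · refine ⟨‖x - z‖⁻¹ • (x - z), ?_, ?_⟩
          · rw [norm_smul, norm_inv, norm_norm,
              inv_mul_cancel₀ (norm_ne_zero_iff.2 (sub_ne_zero.2 hxz))]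
          · rw [smul_smul, mul_inv_cancel₀ (norm_ne_zero_iff.2 (sub_ne_zero.2 hxz)), one_smul]
      refine ⟨x + t • v, ?_, ?_⟩
      · rw [Metric.mem_ball, dist_eq_norm, add_sub_cancel_left, norm_smul, hu1, mul_one,
          Real.norm_eq_abs, abs_of_pos ht0]
        rw [ht]; linarith
      · rintro ⟨g, hg, hgz⟩
        set x' : X := x + t • v with hx'
        set N : ℝ := ‖x - z‖ with hN
        have hN0 : 0 ≤ N := norm_nonneg _
        have hNle : N ≤ ‖x‖ + M := by
          have := norm_sub_le x z
          have := hM z hz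
          rw [hN]; linarith
        have hx'z : x' - z = (N + t) • v := by
          have h0 : x' - z = (x - z) + t • v := by rw [hx']; abel
          rw [h0, huz, ← add_smul]
        have hnx'z : ‖x' - z‖ = N + t := by
          rw [hx'z, norm_smul, hu1, mul_one, Real.norm_eq_abs, abs_of_pos (by linarith)]
        have hgu : t - δ < t * g v := by
          have h1 : (g : X →L[ℝ] ℝ) (x - x') ≤ r x - r x' := (hsubdiff x' ▸ hg) x
          have hxx' : x - x' = -(t • v) := by rw [hx']; abel
          rw [hxx', map_neg, map_smul, smul_eq_mul] at h1
          have h2 : ‖x' - z‖ - f z ≤ r x' := hrle x' z hz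
          rw [hnx'z] at h2
          linarith
        have hguv : (t - δ) / t < g v := (div_lt_iff₀' ht0).2 hgu
        have hmul : (N + t) * ((t - δ) / t) < (N + t) * g v :=
          mul_lt_mul_of_pos_left hguv (by linarith)
        have hgx'z : (g : X →L[ℝ] ℝ) (x' - z) = (N + t) * g v := by
          rw [hx'z, map_smul, smul_eq_mul]
        have hup : (g : X →L[ℝ] ℝ) (x' - z) ≤ f z + r x' - 1 / (n + 1) := hgz z hz
        have hrx' : r x' ≤ r x + t := by
          have := hlip x' x
          have hxx : ‖x' - x‖ = t := by
            rw [hx', add_sub_cancel_left, norm_smul, hu1, mul_one, Real.norm_eq_abs,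
              abs_of_pos ht0]
          rwa [hxx] at this
        -- combine everything
        have hexp : (N + t) * ((t - δ) / t) = N + t - δ * (N + t) / t := by
          field_simp
        have hδbound : δ * (N + t) / t + δ ≤ 1 / (2 * ((n : ℝ) + 1)) := by
          have heq : δ * (N + t) / t + δ = (N + 2 * t) / (((n : ℝ) + 1) * (2 * (t + K))) := by
            rw [hδ]; field_simp; ring
          rw [heq, div_le_div_iff₀ (by positivity) (by positivity)]
          have hNK : N + 2 * t ≤ t + K := by rw [hK]; linarith
          nlinarith [hNK, ht0, hK0, (by positivity : (0:ℝ) < (n:ℝ) + 1)]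
        have hhalf : 1 / (2 * ((n:ℝ) + 1)) < 1 / ((n:ℝ) + 1) := by
          rw [div_lt_div_iff₀ (by positivity) (by positivity)]
          have : (0:ℝ) < (n:ℝ) + 1 := by positivity
          nlinarith
        rw [hexp] at hmul
        rw [hgx'z] at hup
        linarith [hza, hrx', hmul, hup, hδbound, hhalf]
  rw [hGeq]
  exact ⟨IsGδ.iInter fun n => (hclosed n).isOpen_compl.isGδ,
    dense_iInter_of_isOpen (fun n => (hclosed n).isOpen_compl) hdense⟩
end

section
/- Let X be a real Banach space, C a nonempty bounded subset of X, and f : X → ℝ bounded below on C; let r(x) = sup{‖x−z‖ − f(z) : z ∈ C} and ∂r(x) = {x* ∈ X* : ∀ y ∈ X, ⟨x*, y−x⟩ ≤ r(y) − r(x)}. For every integer n ≥ 1, the set F_n = {x ∈ X : ∃ x* ∈ ∂r(x), sup{⟨x*, x−z⟩ − f(z) : z ∈ C} ≤ r(x) − 1/n} is closed in X. -/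
open Filter Topology Metric

/- STATEMENT 2: With X, C, f, r, ∂r as above, for every integer n ≥ 1 the set
F_n = {x : ∃ x* ∈ ∂r(x), sup{⟨x*, x−z⟩ − f(z) : z ∈ C} ≤ r(x) − 1/n} is closed in X. -/
theorem stmt_2 {X : Type*} [NormedAddCommGroup X] [NormedSpace ℝ X] [CompleteSpace X]
    (C : Set X) (hCne : C.Nonempty) (hCb : Bornology.IsBounded C)
    (f : X → ℝ) (hfb : BddBelow (f '' C))
    (r : X → ℝ) (hr : ∀ x, r x = sSup ((fun z => ‖x - z‖ - f z) '' C))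
    (subdiff : X → Set (X →L[ℝ] ℝ))
    (hsubdiff : ∀ x, subdiff x = {g : X →L[ℝ] ℝ | ∀ y : X, g (y - x) ≤ r y - r x})
    (n : ℕ) (hn : 1 ≤ n) :
    IsClosed {x : X | ∃ g ∈ subdiff x,
      sSup ((fun z => g (x - z) - f z) '' C) ≤ r x - 1 / (n : ℝ)} := by
  obtain ⟨R, hR⟩ := hCb.exists_norm_le
  obtain ⟨m, hm⟩ := hfb
  simp only [mem_lowerBounds, Set.mem_image, forall_exists_index, and_imp] at hm
  have hm' : ∀ z ∈ C, m ≤ f z := fun z hz => hm (f z) z hz rfl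
  -- boundedness of the defining sets for r
  have hbdd : ∀ x : X, BddAbove ((fun z => ‖x - z‖ - f z) '' C) := by
    intro x
    refine ⟨‖x‖ + R - m, ?_⟩
    rintro _ ⟨z, hz, rfl⟩
    dsimp only
    have h1 : ‖x - z‖ ≤ ‖x‖ + R := (norm_sub_le x z).trans (by linarith [hR z hz])
    linarith [hm' z hz]
  -- r is 1-Lipschitz
  have hlip : ∀ x y : X, r x ≤ r y + ‖x - y‖ := by
    intro x y
    rw [hr x, hr y]
    refine csSup_le (hCne.image _) ?_
    rintro _ ⟨z, hz, rfl⟩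
    dsimp only
    have h1 : ‖x - z‖ ≤ ‖y - z‖ + ‖x - y‖ := by
      calc ‖x - z‖ = ‖(x - y) + (y - z)‖ := by rw [sub_add_sub_cancel]
        _ ≤ ‖x - y‖ + ‖y - z‖ := norm_add_le _ _
        _ = ‖y - z‖ + ‖x - y‖ := by ring
    have h2 : ‖y - z‖ - f z ≤ sSup ((fun z => ‖y - z‖ - f z) '' C) :=
      le_csSup (hbdd y) ⟨z, hz, rfl⟩
    linarith
  have hrcont : Continuous r := by
    have hL : LipschitzWith 1 r := LipschitzWith.of_dist_le_mul fun x y => by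
      rw [NNReal.coe_one, one_mul, Real.dist_eq, dist_eq_norm, abs_le]
      have h1 := hlip x y
      have h2 := hlip y x
      have h3 : ‖y - x‖ = ‖x - y‖ := norm_sub_rev y x
      constructor <;> linarith
    exact hL.continuous
  -- norm bound on subgradients
  have hgnorm : ∀ (x : X) (g : X →L[ℝ] ℝ), g ∈ subdiff x → ∀ w : X, g w ≤ ‖w‖ := by
    intro x g hg w
    rw [hsubdiff x] at hg
    have h1 := hg (x + w)
    simp only [add_sub_cancel_left] at h1
    have h2 := hlip (x + w) x
    have h3 : ‖x + w - x‖ = ‖w‖ := by rw [add_sub_cancel_left]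
    linarith
  have hgabs : ∀ (x : X) (g : X →L[ℝ] ℝ), g ∈ subdiff x → ∀ w : X, |g w| ≤ ‖w‖ := by
    intro x g hg w
    rw [abs_le]
    refine ⟨?_, hgnorm x g hg w⟩
    have h := hgnorm x g hg (-w)
    simp only [map_neg, norm_neg] at h
    linarith
  -- sequential closedness suffices
  refine IsSeqClosed.isClosed ?_
  intro u x hu hux
  choose g hg hgsup using hu
  -- the g k live in the weak-* compact unit ball
  have hgball : ∀ k, ‖g k‖ ≤ 1 := by
    intro k
    refine ContinuousLinearMap.opNorm_le_bound _ zero_le_one fun w => ?_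
    rw [one_mul]
    exact hgabs (u k) (g k) (hg k) w
  set GG : ℕ → WeakDual ℝ X := fun k => StrongDual.toWeakDual (g k) with hGG
  set K : Set (WeakDual ℝ X) :=
    WeakDual.toStrongDual ⁻¹' Metric.closedBall (0 : StrongDual ℝ X) 1 with hKdef
  have hK : IsCompact K := WeakDual.isCompact_closedBall 0 1
  have hmemK : ∀ k, GG k ∈ K := by
    intro k
    simp only [hKdef, Set.mem_preimage, Metric.mem_closedBall, dist_zero_right]
    exact hgball k
  have hle : map GG atTop ≤ 𝓟 K :=
    le_principal_iff.mpr (Filter.mem_map.mpr (Filter.univ_mem' fun k => hmemK k))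
  obtain ⟨G, hGK, hGcl⟩ := hK hle
  obtain ⟨U, hUle, hUt⟩ := mapClusterPt_iff_ultrafilter.mp hGcl
  -- evaluation convergence along U
  have heval : ∀ w : X, Tendsto (fun k => (g k) w) U (𝓝 (G w)) := by
    intro w
    exact ((WeakDual.eval_continuous w).tendsto G).comp hUt
  have hx : Tendsto u U (𝓝 x) := hux.mono_left hUle
  have hrx : Tendsto (fun k => r (u k)) U (𝓝 (r x)) := (hrcont.tendsto x).comp hx
  have hnorm0 : Tendsto (fun k => ‖u k - x‖) U (𝓝 0) := by
    have h : Tendsto (fun k => u k - x) U (𝓝 0) := by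
      simpa using hx.sub (tendsto_const_nhds (x := x))
    simpa using h.norm
  set G' : X →L[ℝ] ℝ := WeakDual.toStrongDual G with hG'
  have hGsub : G' ∈ subdiff x := by
    rw [hsubdiff x]
    intro y
    have key : ∀ k, (g k) (y - x) ≤ r y - r (u k) + ‖u k - x‖ := by
      intro k
      have h1 : (g k) (y - u k) ≤ r y - r (u k) := by
        have h := hg k; rw [hsubdiff (u k)] at h; exact h y
      have h2 : (g k) (u k - x) ≤ ‖u k - x‖ := hgnorm (u k) (g k) (hg k) _
      have h3 : (g k) (y - x) = (g k) (y - u k) + (g k) (u k - x) := by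
        rw [← map_add]; congr 1; abel
      linarith
    have hl : Tendsto (fun k => (g k) (y - x)) U (𝓝 (G' (y - x))) := heval (y - x)
    have hr' : Tendsto (fun k => r y - r (u k) + ‖u k - x‖) U (𝓝 (r y - r x + 0)) :=
      (tendsto_const_nhds.sub hrx).add hnorm0
    have h := le_of_tendsto_of_tendsto' hl hr' key
    linarith
  refine ⟨G', hGsub, ?_⟩
  refine csSup_le (hCne.image _) ?_
  rintro _ ⟨z, hz, rfl⟩
  dsimp only
  -- pointwise bound passed to the limit
  have key : ∀ k, (g k) (x - z) - f z ≤ r (u k) - 1 / (n : ℝ) + ‖u k - x‖ := by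
    intro k
    have hbdd2 : BddAbove ((fun w => (g k) (u k - w) - f w) '' C) := by
      refine ⟨‖u k‖ + R - m, ?_⟩
      rintro _ ⟨w, hw, rfl⟩
      dsimp only
      have h1 : (g k) (u k - w) ≤ ‖u k - w‖ := hgnorm (u k) (g k) (hg k) _
      have h2 : ‖u k - w‖ ≤ ‖u k‖ + R := (norm_sub_le _ _).trans (by linarith [hR w hw])
      linarith [hm' w hw]
    have h1 : (g k) (u k - z) - f z ≤ r (u k) - 1 / (n : ℝ) :=
      le_trans (le_csSup hbdd2 ⟨z, hz, rfl⟩) (hgsup k)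
    have h2 : (g k) (x - u k) ≤ ‖x - u k‖ := hgnorm (u k) (g k) (hg k) _
    have h3 : (g k) (x - z) = (g k) (x - u k) + (g k) (u k - z) := by
      rw [← map_add]; congr 1; abel
    have h4 : ‖x - u k‖ = ‖u k - x‖ := norm_sub_rev _ _
    linarith
  have hl : Tendsto (fun k => (g k) (x - z) - f z) U (𝓝 (G' (x - z) - f z)) :=
    (heval (x - z)).sub tendsto_const_nhds
  have hr' : Tendsto (fun k => r (u k) - 1 / (n : ℝ) + ‖u k - x‖)
      U (𝓝 (r x - 1 / (n : ℝ) + 0)) :=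
    (hrx.sub tendsto_const_nhds).add hnorm0
  have h := le_of_tendsto_of_tendsto' hl hr' key
  linarith
end

section
/- Let X be a real Banach space, C a nonempty bounded subset of X, and f : X → ℝ bounded below on C; let r(x) = sup{‖x−z‖ − f(z) : z ∈ C} and ∂r(x) = {x* ∈ X* : ∀ y ∈ X, ⟨x*, y−x⟩ ≤ r(y) − r(x)}. For every integer n ≥ 1, the set F_n = {x ∈ X : ∃ x* ∈ ∂r(x), sup{⟨x*, x−z⟩ − f(z) : z ∈ C} ≤ r(x) − 1/n} has empty interior (hence, being closed, is nowhere dense). -/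
/- STATEMENT 3: With X, C, f, r, ∂r as above, for every integer n ≥ 1 the set
F_n = {x : ∃ x* ∈ ∂r(x), sup{⟨x*, x−z⟩ − f(z) : z ∈ C} ≤ r(x) − 1/n} has empty interior. -/
set_option maxHeartbeats 1000000 in
theorem stmt_3 {X : Type*} [NormedAddCommGroup X] [NormedSpace ℝ X] [CompleteSpace X]
    (C : Set X) (hCne : C.Nonempty) (hCb : Bornology.IsBounded C)
    (f : X → ℝ) (hfb : BddBelow (f '' C))
    (r : X → ℝ) (hr : ∀ x, r x = sSup ((fun z => ‖x - z‖ - f z) '' C))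
    (subdiff : X → Set (X →L[ℝ] ℝ))
    (hsubdiff : ∀ x, subdiff x = {g : X →L[ℝ] ℝ | ∀ y : X, g (y - x) ≤ r y - r x})
    (n : ℕ) (hn : 1 ≤ n) :
    interior {x : X | ∃ g ∈ subdiff x,
      sSup ((fun z => g (x - z) - f z) '' C) ≤ r x - 1 / (n : ℝ)} = ∅ := by
  classical
  have hνpos : (0:ℝ) < (n:ℝ) := by exact_mod_cast Nat.lt_of_lt_of_le Nat.zero_lt_one hn
  have hinv : (0:ℝ) < 1 / (n:ℝ) := by positivity
  -- bounds
  obtain ⟨M0, hM0⟩ := isBounded_iff_forall_norm_le.mp hCb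
  set M : ℝ := max M0 0 with hMdef
  have hM : ∀ z ∈ C, ‖z‖ ≤ M := fun z hz => (hM0 z hz).trans (le_max_left _ _)
  have hM0' : (0:ℝ) ≤ M := le_max_right _ _
  obtain ⟨m, hm⟩ := hfb
  have hm' : ∀ z ∈ C, m ≤ f z := fun z hz => hm ⟨z, hz, rfl⟩
  have hBdd : ∀ p : X, BddAbove ((fun z => ‖p - z‖ - f z) '' C) := by
    intro p
    refine ⟨‖p‖ + M - m, ?_⟩
    rintro _ ⟨z, hz, rfl⟩
    have h₁ : ‖p - z‖ ≤ ‖p‖ + ‖z‖ := norm_sub_le _ _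
    have h₂ := hM z hz
    have h₃ := hm' z hz
    simp only
    linarith
  have h1 : ∀ p z, z ∈ C → ‖p - z‖ - f z ≤ r p := by
    intro p z hz
    rw [hr p]
    exact le_csSup (hBdd p) ⟨z, hz, rfl⟩
  have hLip : ∀ p q : X, r q ≤ r p + ‖q - p‖ := by
    intro p q
    rw [hr q]
    apply csSup_le (hCne.image _)
    rintro _ ⟨z, hz, rfl⟩
    have h₁ := h1 p z hz
    have h₂ : ‖q - z‖ ≤ ‖q - p‖ + ‖p - z‖ := norm_sub_le_norm_sub_add_norm_sub q p z
    simp only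
    linarith
  rcases subsingleton_or_nontrivial X with hS | hN
  · -- subsingleton case: the set itself is empty
    have hempty : {x : X | ∃ g ∈ subdiff x,
        sSup ((fun z => g (x - z) - f z) '' C) ≤ r x - 1 / (n : ℝ)} = ∅ := by
      rw [Set.eq_empty_iff_forall_notMem]
      rintro x ⟨g, hg, hs⟩
      have hfun : (fun z => g (x - z) - f z) = (fun z => ‖x - z‖ - f z) := by
        funext z
        have hxz : x - z = 0 := Subsingleton.elim _ _
        rw [hxz]
        simp
      rw [hfun, ← hr x] at hs
      linarith
    rw [hempty, interior_empty]
  · rw [Set.eq_empty_iff_forall_notMem]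
    intro x hx
    rcases Metric.isOpen_iff.mp isOpen_interior x hx with ⟨ε, hε, hball⟩
    have hball' : Metric.ball x ε ⊆ {x : X | ∃ g ∈ subdiff x,
        sSup ((fun z => g (x - z) - f z) '' C) ≤ r x - 1 / (n : ℝ)} :=
      hball.trans interior_subset
    set t : ℝ := ε / 2 with htdef
    have ht : 0 < t := by positivity
    set K : ℝ := ‖x‖ + M with hKdef
    have hK0 : 0 ≤ K := by positivity
    have haK : ∀ z ∈ C, ‖x - z‖ ≤ K := by
      intro z hz
      have := norm_sub_le x z
      have := hM z hz
      simp only [hKdef]; linarith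
    have hKt : (0:ℝ) < (n:ℝ) * (2 * (K + 2 * t)) := by
      apply mul_pos hνpos; linarith
    set δ : ℝ := min (t / 2) (t / ((n:ℝ) * (2 * (K + 2 * t)))) with hδdef
    have hδ : 0 < δ := lt_min (by positivity) (by positivity)
    have hδ2 : δ * ((n:ℝ) * (2 * (K + 2 * t))) ≤ t :=
      (le_div_iff₀ hKt).mp (min_le_right _ _)
    -- choose z nearly attaining the sup
    have hlt0 : r x - δ < sSup ((fun z => ‖x - z‖ - f z) '' C) := by
      rw [← hr x]; linarith
    obtain ⟨_, ⟨z, hz, rfl⟩, hlt⟩ := exists_lt_of_lt_csSup (hCne.image _) hlt0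
    simp only at hlt
    -- direction u
    obtain ⟨v, hv⟩ := exists_ne (0 : X)
    set u₀ : X := ‖v‖⁻¹ • v with hu₀def
    have hu₀ : ‖u₀‖ = 1 := by
      rw [hu₀def, norm_smul, norm_inv, norm_norm,
        inv_mul_cancel₀ (norm_ne_zero_iff.mpr hv)]
    set u : X := if x = z then u₀ else ‖x - z‖⁻¹ • (x - z) with hudef
    have hu : ‖u‖ = 1 := by
      by_cases h : x = z
      · simp [hudef, h, hu₀]
      · have hne : x - z ≠ 0 := sub_ne_zero.mpr h
        rw [hudef, if_neg h, norm_smul, norm_inv, norm_norm,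
          inv_mul_cancel₀ (norm_ne_zero_iff.mpr hne)]
    have hxz : x - z = ‖x - z‖ • u := by
      by_cases h : x = z
      · simp [h]
      · have hne : x - z ≠ 0 := sub_ne_zero.mpr h
        rw [hudef, if_neg h, smul_smul, mul_inv_cancel₀ (norm_ne_zero_iff.mpr hne), one_smul]
    set y : X := x + t • u with hydef
    have hyx : y - x = t • u := by rw [hydef]; abel
    have hyxn : ‖y - x‖ = t := by
      rw [hyx, norm_smul, hu, mul_one, Real.norm_eq_abs, abs_of_pos ht]
    have hymem : y ∈ Metric.ball x ε := by
      rw [Metric.mem_ball, dist_eq_norm, hyxn]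
      linarith
    obtain ⟨g, hgsub, hsup⟩ := hball' hymem
    rw [hsubdiff y] at hgsub
    have hgy : ∀ w : X, g (w - y) ≤ r w - r y := hgsub
    have hgle : ∀ w : X, g w ≤ ‖w‖ := by
      intro w
      have h₁ := hgy (y + w)
      have h₂ := hLip y (y + w)
      simp only [add_sub_cancel_left] at h₁ h₂
      linarith
    have hyz : y - z = (‖x - z‖ + t) • u := by
      have : y - z = (x - z) + t • u := by rw [hydef]; abel
      rw [this, add_smul, ← hxz]
    set a : ℝ := ‖x - z‖ with hadef
    have ha0 : 0 ≤ a := norm_nonneg _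
    have haK' : a ≤ K := haK z hz
    have hyzn : ‖y - z‖ = a + t := by
      rw [hyz, norm_smul, hu, mul_one, Real.norm_eq_abs, abs_of_pos (by linarith)]
    -- r y is large
    have hry1 : r x - δ + t < r y := by
      have := h1 y z hz
      rw [hyzn] at this
      linarith
    set s : ℝ := g u with hsdef
    have hs1 : s ≤ 1 := by have := hgle u; rw [hu] at this; exact this
    have hts : t - δ < t * s := by
      have h₁ := hgy x
      have hxy : x - y = -(t • u) := by rw [hydef]; abel
      rw [hxy, map_neg, map_smul, smul_eq_mul] at h₁
      linarith
    have hgyz : g (y - z) = (a + t) * s := by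
      rw [hyz, map_smul, smul_eq_mul]
    -- membership in the sup set
    have hTB : BddAbove ((fun z => g (y - z) - f z) '' C) := by
      refine ⟨‖y‖ + M - m, ?_⟩
      rintro _ ⟨w, hw, rfl⟩
      have h₁ := hgle (y - w)
      have h₂ : ‖y - w‖ ≤ ‖y‖ + ‖w‖ := norm_sub_le _ _
      have h₃ := hM w hw
      have h₄ := hm' w hw
      simp only
      linarith
    have hin : g (y - z) - f z ≤ sSup ((fun z => g (y - z) - f z) '' C) :=
      le_csSup hTB ⟨z, hz, rfl⟩
    have hryx : r y ≤ r x + t := by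
      have := hLip x y
      rw [hyxn] at this
      linarith
    -- the key chain
    clear_value M t K δ u₀ u y a s
    have hA : (a + t) * s - f z ≤ r x + t - 1 / (n:ℝ) := by
      rw [← hgyz]; linarith
    have e1 : (a + t) * s < a + t + δ - 1 / (n:ℝ) := by linarith
    have hts' : t - t * s ≤ δ := by linarith
    have e5 : t * ((a + t) - (a + t) * s) ≤ (a + t) * δ := by
      have h := mul_le_mul_of_nonneg_left hts' (show (0:ℝ) ≤ a + t by linarith)
      nlinarith [h]
    have e6 : t * (1 / (n:ℝ) - δ) < (a + t) * δ := by
      have h := mul_lt_mul_of_pos_left (show 1 / (n:ℝ) - δ < (a + t) - (a + t) * s by linarith) ht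
      linarith
    have e7 : (a + t) * δ ≤ (K + t) * δ := mul_le_mul_of_nonneg_right (by linarith) hδ.le
    have e8 : t * (1 / (n:ℝ)) < (K + 2 * t) * δ := by nlinarith
    have e10 : t < (n:ℝ) * ((K + 2 * t) * δ) := by
      have h := mul_lt_mul_of_pos_left e8 hνpos
      calc t = (n:ℝ) * (t * (1 / (n:ℝ))) := by field_simp
        _ < _ := h
    nlinarith [e10, hδ2]
end

section
/- Let X be a real Banach space, C a nonempty weakly compact subset of X, and f : X → ℝ bounded below on C and lower semi-continuous for the weak topology on X. If x ∈ X is such that for every x* ∈ ∂r(x) one has sup{⟨x*, x−z⟩ − f(z) : z ∈ C} = r(x), then there exists z₀ ∈ C with r(x) = ‖x−z₀‖ − f(z₀); that is, G ⊆ D(C,f) where G = {x ∈ X : ∀ x* ∈ ∂r(x), sup{⟨x*, x−z⟩ − f(z) : z ∈ C} = r(x)} and D(C,f) = {x ∈ X : ∃ z ∈ C, r(x) = ‖x−z‖ − f(z)}. -/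
/-- A lower semicontinuous real function attains its minimum on a nonempty compact set. -/
theorem lsc_min_on_compact' {α : Type*} [TopologicalSpace α] {s : Set α} (hs : IsCompact s)
    (hne : s.Nonempty) {f : α → ℝ} (hf : LowerSemicontinuous f) :
    ∃ a ∈ s, ∀ b ∈ s, f a ≤ f b := by
  by_contra h
  push_neg at h
  have hcover : s ⊆ ⋃ b ∈ s, f ⁻¹' Set.Ioi (f b) := by
    intro a ha
    obtain ⟨b, hb, hlt⟩ := h a ha
    exact Set.mem_biUnion hb hlt
  obtain ⟨t, hts, htfin, hcov⟩ := hs.elim_finite_subcover_image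
    (fun b _ => hf.isOpen_preimage (f b)) hcover
  obtain ⟨a₀, ha₀⟩ := hne
  obtain ⟨b1, hb1t, _⟩ := Set.mem_iUnion₂.1 (hcov ha₀)
  obtain ⟨a, hat, hmin⟩ := Set.exists_min_image t f htfin ⟨b1, hb1t⟩
  obtain ⟨b, hbt, hb⟩ := Set.mem_iUnion₂.1 (hcov (hts hat))
  exact absurd (hmin b hbt) (not_le.2 hb)

/- STATEMENT 4: X a real Banach space, C a nonempty weakly compact subset, f bounded below
on C and weakly lower semi-continuous, r(x) = sup{‖x−z‖ − f(z) : z ∈ C}. If x is such that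
for every x* ∈ ∂r(x) one has sup{⟨x*, x−z⟩ − f(z) : z ∈ C} = r(x), then there exists
z₀ ∈ C with r(x) = ‖x−z₀‖ − f(z₀); i.e. G ⊆ D(C,f). -/
set_option maxHeartbeats 1000000 in
theorem stmt_4 {X : Type*} [NormedAddCommGroup X] [NormedSpace ℝ X] [CompleteSpace X]
    (C : Set X) (hCne : C.Nonempty)
    (hCw : IsCompact (toWeakSpace ℝ X '' C))
    (f : X → ℝ) (hfb : BddBelow (f '' C))
    (hflsc : LowerSemicontinuous (fun x : WeakSpace ℝ X => f ((toWeakSpace ℝ X).symm x)))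
    (r : X → ℝ) (hr : ∀ x, r x = sSup ((fun z => ‖x - z‖ - f z) '' C))
    (subdiff : X → Set (X →L[ℝ] ℝ))
    (hsubdiff : ∀ x, subdiff x = {g : X →L[ℝ] ℝ | ∀ y : X, g (y - x) ≤ r y - r x})
    (x : X) (hx : ∀ g ∈ subdiff x, sSup ((fun z => g (x - z) - f z) '' C) = r x) :
    ∃ z₀ ∈ C, r x = ‖x - z₀‖ - f z₀ := by
  classical
  obtain ⟨z₁, hz₁⟩ := hCne
  obtain ⟨m, hm⟩ := hfb
  have hmle : ∀ z ∈ C, m ≤ f z := fun z hz => hm ⟨z, hz, rfl⟩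
  -- Step A: C is norm-bounded (weakly compact sets are bounded, via Banach–Steinhaus)
  have hCbdd : ∃ M : ℝ, ∀ z ∈ C, ‖z‖ ≤ M := by
    have hpt : ∀ φ : X →L[ℝ] ℝ, ∃ Mφ : ℝ, ∀ z : C,
        ‖(NormedSpace.inclusionInDoubleDual ℝ X z.1) φ‖ ≤ Mφ := by
      intro φ
      have hcφ : Continuous fun w : WeakSpace ℝ X => φ ((toWeakSpace ℝ X).symm w) :=
        WeakBilin.eval_continuous _ φ
      have hcomp : IsCompact ((fun w : WeakSpace ℝ X => φ ((toWeakSpace ℝ X).symm w)) ''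
          (toWeakSpace ℝ X '' C)) := hCw.image hcφ
      obtain ⟨Mφ, hMφ⟩ := isBounded_iff_forall_norm_le.1 hcomp.isBounded
      refine ⟨Mφ, fun z => ?_⟩
      have hmem : φ z.1 ∈ (fun w : WeakSpace ℝ X => φ ((toWeakSpace ℝ X).symm w)) ''
          (toWeakSpace ℝ X '' C) := by
        refine ⟨toWeakSpace ℝ X z.1, ⟨z.1, z.2, rfl⟩, ?_⟩
        simp
      exact hMφ _ hmem
    obtain ⟨M, hM⟩ := banach_steinhaus hpt
    refine ⟨M, fun z hz => ?_⟩
    calc ‖z‖ = ‖NormedSpace.inclusionInDoubleDual ℝ X z‖ :=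
          ((NormedSpace.inclusionInDoubleDualLi ℝ (E := X)).norm_map z).symm
      _ ≤ M := hM ⟨z, hz⟩
  obtain ⟨M, hMC⟩ := hCbdd
  -- Step B: the sets defining r are nonempty and bounded above
  have hne' : ∀ y : X, ((fun z => ‖y - z‖ - f z) '' C).Nonempty :=
    fun y => ⟨_, ⟨z₁, hz₁, rfl⟩⟩
  have hbddA : ∀ y : X, BddAbove ((fun z => ‖y - z‖ - f z) '' C) := by
    intro y
    refine ⟨‖y‖ + M - m, ?_⟩
    rintro _ ⟨z, hz, rfl⟩
    have h1 : ‖y - z‖ ≤ ‖y‖ + M := (norm_sub_le y z).trans (by linarith [hMC z hz])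
    have h2 := hmle z hz
    simp only []
    linarith
  have hrge : ∀ y : X, ∀ z ∈ C, ‖y - z‖ - f z ≤ r y := fun y z hz => by
    rw [hr y]; exact le_csSup (hbddA y) ⟨z, hz, rfl⟩
  have hrle : ∀ (y : X) (b : ℝ), (∀ z ∈ C, ‖y - z‖ - f z ≤ b) → r y ≤ b := by
    intro y b hb
    rw [hr y]
    exact csSup_le (hne' y) (by rintro _ ⟨z, hz, rfl⟩; exact hb z hz)
  -- Step C: r is 1-Lipschitz
  have hlip : ∀ y y' : X, r y - r y' ≤ ‖y - y'‖ := by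
    intro y y'
    have h : r y ≤ r y' + ‖y - y'‖ := by
      refine hrle y _ (fun z hz => ?_)
      have h1 : ‖y - z‖ ≤ ‖y' - z‖ + ‖y - y'‖ := by
        calc ‖y - z‖ = ‖(y - y') + (y' - z)‖ := by abel_nf
          _ ≤ ‖y - y'‖ + ‖y' - z‖ := norm_add_le _ _
          _ = ‖y' - z‖ + ‖y - y'‖ := by ring
      have h2 := hrge y' z hz
      linarith
    linarith
  have hrcont : Continuous r := by
    have : LipschitzWith 1 r := by
      refine LipschitzWith.of_dist_le_mul fun y y' => ?_
      rw [Real.dist_eq, dist_eq_norm, NNReal.coe_one, one_mul]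
      refine abs_le.2 ⟨?_, hlip y y'⟩
      have := hlip y' y
      rw [norm_sub_rev] at this
      linarith
    exact this.continuous
  -- Step D: r is convex
  have hrconv : ∀ (y y' : X) (a b : ℝ), 0 ≤ a → 0 ≤ b → a + b = 1 →
      r (a • y + b • y') ≤ a * r y + b * r y' := by
    intro y y' a b ha hb hab
    refine hrle _ _ (fun z hz => ?_)
    have h1 := hrge y z hz
    have h2 := hrge y' z hz
    have hzz : a • z + b • z = z := by rw [← add_smul, hab, one_smul]
    have hsplit : a • y + b • y' - z = a • (y - z) + b • (y' - z) := by
      conv_lhs => rw [← hzz]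
      module
    have hnorm : ‖a • y + b • y' - z‖ ≤ a * ‖y - z‖ + b * ‖y' - z‖ := by
      rw [hsplit]
      refine (norm_add_le _ _).trans ?_
      rw [norm_smul, norm_smul, Real.norm_of_nonneg ha, Real.norm_of_nonneg hb]
    have h1' : a * ‖y - z‖ ≤ a * (r y + f z) :=
      mul_le_mul_of_nonneg_left (by linarith) ha
    have h2' : b * ‖y' - z‖ ≤ b * (r y' + f z) :=
      mul_le_mul_of_nonneg_left (by linarith) hb
    have hf' : a * f z + b * f z = f z := by rw [← add_mul, hab, one_mul]
    have hexp1 : a * (r y + f z) = a * r y + a * f z := by ring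
    have hexp2 : b * (r y' + f z) = b * r y' + b * f z := by ring
    linarith [hnorm, h1', h2']
  -- Step E: geometric Hahn-Banach on the open strict epigraph gives a subgradient
  set Epi : Set (X × ℝ) := {p | r p.1 < p.2} with hEpi
  have hEopen : IsOpen Epi := isOpen_lt (hrcont.comp continuous_fst) continuous_snd
  have hEconv : Convex ℝ Epi := by
    intro p hp q hq a b ha hb hab
    simp only [hEpi, Set.mem_setOf_eq] at hp hq ⊢
    have hpos : 0 < a ∨ 0 < b := by
      by_contra hc
      push_neg at hc
      have : a = 0 := le_antisymm hc.1 ha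
      have : b = 0 := le_antisymm hc.2 hb
      simp_all
    have hfst : (a • p + b • q).1 = a • p.1 + b • q.1 := rfl
    have hsnd : (a • p + b • q).2 = a * p.2 + b * q.2 := rfl
    rw [hfst, hsnd]
    refine lt_of_le_of_lt (hrconv p.1 q.1 a b ha hb hab) ?_
    rcases hpos with hA | hB
    · have s1 : a * r p.1 < a * p.2 := mul_lt_mul_of_pos_left hp hA
      have s2 : b * r q.1 ≤ b * q.2 := mul_le_mul_of_nonneg_left hq.le hb
      linarith
    · have s1 : a * r p.1 ≤ a * p.2 := mul_le_mul_of_nonneg_left hp.le ha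
      have s2 : b * r q.1 < b * q.2 := mul_lt_mul_of_pos_left hq hB
      linarith
  have hxnot : ((x, r x) : X × ℝ) ∉ Epi := by simp [hEpi]
  obtain ⟨F, hF⟩ := geometric_hahn_banach_open_point hEconv hEopen hxnot
  set c : ℝ := F (0, 1) with hc
  set φ : X →L[ℝ] ℝ := F.comp (ContinuousLinearMap.inl ℝ X ℝ) with hφ
  have hdecomp : ∀ (y : X) (s : ℝ), F (y, s) = φ y + s * c := by
    intro y s
    have hsplit : ((y, s) : X × ℝ) = (y, (0 : ℝ)) + s • ((0 : X), (1 : ℝ)) := by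
      simp [Prod.ext_iff]
    rw [hsplit, map_add, map_smul]
    simp [hφ, hc, smul_eq_mul]
  have hc_neg : c < 0 := by
    have h1 : F (x, r x + 1) < F (x, r x) := hF _ (by simp [hEpi])
    rw [hdecomp, hdecomp] at h1
    linarith
  have hkey : ∀ y : X, φ y + c * r y ≤ φ x + c * r x := by
    intro y
    by_contra hcon
    push_neg at hcon
    set δ : ℝ := (φ y + c * r y) - (φ x + c * r x) with hδ
    have hδpos : 0 < δ := by simp [hδ]; linarith
    set ε : ℝ := δ / (2 * (-c)) with hε
    have hεpos : 0 < ε := by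
      apply div_pos hδpos; linarith
    have hmem : ((y, r y + ε) : X × ℝ) ∈ Epi := by simp [hEpi]; linarith
    have h1 := hF _ hmem
    rw [hdecomp, hdecomp] at h1
    have hcne : c ≠ 0 := ne_of_lt hc_neg
    have hεc : ε * c = -δ / 2 := by
      rw [hε]; field_simp
    nlinarith [h1]
  set g : X →L[ℝ] ℝ := (-c)⁻¹ • φ with hg
  have hgsub' : ∀ y : X, g (y - x) ≤ r y - r x := by
    intro y
    have h := hkey y
    have hgval : g (y - x) = (-c)⁻¹ * (φ y - φ x) := by
      simp [hg, map_sub]; ring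
    rw [hgval, inv_mul_le_iff₀ (by linarith : (0:ℝ) < -c)]
    nlinarith [h]
  have hgsub : g ∈ subdiff x := by
    rw [hsubdiff]; exact hgsub'
  have hxg := hx g hgsub
  -- Step F: the weakly usc function z ↦ g(x-z) - f z attains its max on C
  set F2 : WeakSpace ℝ X → ℝ :=
    fun w => f ((toWeakSpace ℝ X).symm w) + (g ((toWeakSpace ℝ X).symm w) - g x) with hF2def
  have hcont2 : Continuous fun w : WeakSpace ℝ X => g ((toWeakSpace ℝ X).symm w) :=
    WeakBilin.eval_continuous _ g
  have hF2 : LowerSemicontinuous F2 :=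
    hflsc.add ((hcont2.sub continuous_const).lowerSemicontinuous)
  obtain ⟨w₀, hw₀K, hw₀min⟩ := lsc_min_on_compact' hCw ⟨toWeakSpace ℝ X z₁, ⟨z₁, hz₁, rfl⟩⟩ hF2
  obtain ⟨z₀, hz₀C, rfl⟩ := hw₀K
  have hmax : ∀ z ∈ C, g (x - z) - f z ≤ g (x - z₀) - f z₀ := by
    intro z hz
    have h := hw₀min (toWeakSpace ℝ X z) ⟨z, hz, rfl⟩
    simp only [hF2def, LinearEquiv.symm_apply_apply] at h
    have e1 : g (x - z) = g x - g z := map_sub g x z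
    have e2 : g (x - z₀) = g x - g z₀ := map_sub g x z₀
    rw [e1, e2]
    linarith
  have hSup : sSup ((fun z => g (x - z) - f z) '' C) = g (x - z₀) - f z₀ := by
    refine le_antisymm ?_ ?_
    · refine csSup_le ⟨_, ⟨z₁, hz₁, rfl⟩⟩ ?_
      rintro _ ⟨z, hz, rfl⟩
      exact hmax z hz
    · refine le_csSup ⟨g (x - z₀) - f z₀, ?_⟩ ⟨z₀, hz₀C, rfl⟩
      rintro _ ⟨z, hz, rfl⟩
      exact hmax z hz
  have hrx : r x = g (x - z₀) - f z₀ := by rw [← hxg, hSup]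
  -- Step G: ‖g‖ ≤ 1 in the needed direction
  have hgle : g (x - z₀) ≤ ‖x - z₀‖ := by
    have h1 := hgsub' (x + (x - z₀))
    have harg : (x + (x - z₀)) - x = x - z₀ := by abel
    rw [harg] at h1
    have h2 : r (x + (x - z₀)) - r x ≤ ‖(x + (x - z₀)) - x‖ := hlip _ _
    rw [harg] at h2
    linarith
  refine ⟨z₀, hz₀C, le_antisymm ?_ ?_⟩
  · rw [hrx]; linarith
  · exact hrge x z₀ hz₀C
end

section
/- Let X be a real Banach space and C a nonempty weakly compact subset of X. Then the set of points x ∈ X such that the function z ↦ ‖x−z‖ − ‖z‖ attains its supremum on C is dense in X. -/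
open Filter Topology Metric Set NormedSpace

section aux
variable {X : Type*} [NormedAddCommGroup X] [NormedSpace ℝ X]

lemma aux_cluster_mem {α : Type*} [TopologicalSpace α] {u : ℕ → α} {φ : α}
    (h : ClusterPt φ (Filter.map u atTop)) {s : Set α} (hs : IsClosed s)
    (hu : ∀ᶠ n in atTop, u n ∈ s) : φ ∈ s := by
  have h2 : Filter.map u atTop ≤ 𝓟 s := Filter.le_principal_iff.2 (Filter.mem_map.2 hu)
  exact hs.closure_subset (mem_closure_iff_clusterPt.2 (h.mono h2))

lemma aux_norm_lsc :
    LowerSemicontinuous (fun w : WeakSpace ℝ X => ‖(toWeakSpace ℝ X).symm w‖) := by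
  intro w₀ c hc
  rcases le_or_gt 0 c with h0 | h0
  · have hne : (toWeakSpace ℝ X).symm w₀ ≠ 0 := by
      intro h
      simp only [h, norm_zero] at hc
      linarith
    obtain ⟨g, hg1, hg2⟩ := exists_dual_vector ℝ ((toWeakSpace ℝ X).symm w₀) (norm_ne_zero_iff.2 hne)
    have hcont : Continuous fun w : WeakSpace ℝ X => g ((toWeakSpace ℝ X).symm w) :=
      WeakBilin.eval_continuous _ g
    have hopen : IsOpen {w : WeakSpace ℝ X | c < g ((toWeakSpace ℝ X).symm w)} :=
      isOpen_lt continuous_const hcont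
    have hmem : w₀ ∈ {w : WeakSpace ℝ X | c < g ((toWeakSpace ℝ X).symm w)} := by
      simp only [mem_setOf_eq, hg2]; exact hc
    filter_upwards [hopen.mem_nhds hmem] with w hw
    calc c < g ((toWeakSpace ℝ X).symm w) := hw
    _ ≤ |g ((toWeakSpace ℝ X).symm w)| := le_abs_self _
    _ ≤ ‖g‖ * ‖(toWeakSpace ℝ X).symm w‖ := g.le_opNorm _
    _ = ‖(toWeakSpace ℝ X).symm w‖ := by rw [hg1, one_mul]
  · filter_upwards with w
    exact lt_of_lt_of_le h0 (norm_nonneg _)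

lemma aux_bounded [CompleteSpace X] {C : Set X} (hCw : IsCompact (toWeakSpace ℝ X '' C)) :
    ∃ R : ℝ, 0 < R ∧ ∀ z ∈ C, ‖z‖ ≤ R := by
  have hpt : ∀ f : StrongDual ℝ X, ∃ M : ℝ,
      ∀ z : C, ‖NormedSpace.inclusionInDoubleDual ℝ X (z : X) f‖ ≤ M := by
    intro f
    have hcont : Continuous fun w : WeakSpace ℝ X => f ((toWeakSpace ℝ X).symm w) :=
      WeakBilin.eval_continuous _ f
    have himg : IsCompact ((fun w : WeakSpace ℝ X => f ((toWeakSpace ℝ X).symm w)) ''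
        (toWeakSpace ℝ X '' C)) := hCw.image hcont
    obtain ⟨M, hM⟩ := himg.isBounded.subset_closedBall 0
    refine ⟨M, fun z => ?_⟩
    have : f ((toWeakSpace ℝ X).symm (toWeakSpace ℝ X (z : X))) ∈ _ :=
      Set.mem_image_of_mem _ (Set.mem_image_of_mem _ z.2)
    have := hM this
    simpa [Real.dist_eq, abs_sub_comm] using this
  obtain ⟨M, hM⟩ :=
    banach_steinhaus (g := fun z : C => NormedSpace.inclusionInDoubleDual ℝ X (z : X)) hpt
  refine ⟨max M 1, by positivity, fun z hz => ?_⟩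
  have := hM ⟨z, hz⟩
  have heq : ‖NormedSpace.inclusionInDoubleDual ℝ X z‖ = ‖z‖ :=
    (NormedSpace.inclusionInDoubleDualLi ℝ (E := X)).norm_map z
  rw [heq] at this
  exact le_trans this (le_max_left _ _)

lemma aux_sublevel_closed {h : WeakSpace ℝ X → ℝ} (hl : LowerSemicontinuous h) (c : ℝ) :
    IsClosed {w | h w ≤ c} := by
  rw [← isOpen_compl_iff]
  rw [isOpen_iff_mem_nhds]
  intro w hw
  have : c < h w := not_le.1 hw
  have := hl w c this
  rw [Filter.eventually_iff] at this
  exact Filter.mem_of_superset this (fun w' (hw' : c < h w') => (not_le.2 hw' : w' ∈ {w | h w ≤ c}ᶜ))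

end aux

section key
variable {X : Type*} [NormedAddCommGroup X] [NormedSpace ℝ X] [CompleteSpace X] [Nontrivial X]

set_option maxHeartbeats 2000000 in
lemma key_lemma (C : Set X) (hCne : C.Nonempty) (hCw : IsCompact (toWeakSpace ℝ X '' C))
    (x₀ : X) (ε : ℝ) (hε : 0 < ε) :
    ∃ x : X, ‖x - x₀‖ ≤ ε ∧ ∃ z₀ ∈ C,
      ‖x - z₀‖ - ‖z₀‖ = sSup ((fun z => ‖x - z‖ - ‖z‖) '' C) := by
  classical
  obtain ⟨R, hR0, hR⟩ := @aux_bounded X _ _ _ C hCw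
  set F : X → ℝ := fun y => sSup ((fun z => ‖y - z‖ - ‖z‖) '' C) with hF
  have hbdd : ∀ y : X, BddAbove ((fun z => ‖y - z‖ - ‖z‖) '' C) := by
    intro y
    refine ⟨‖y‖, ?_⟩
    rintro v ⟨z, hz, rfl⟩
    have := norm_sub_le y z
    simp only
    linarith
  have hFge : ∀ y : X, ∀ z ∈ C, ‖y - z‖ - ‖z‖ ≤ F y := by
    intro y z hz
    exact le_csSup (hbdd y) (Set.mem_image_of_mem _ hz)
  have hFlip : ∀ a b : X, F a ≤ F b + ‖a - b‖ := by
    intro a b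
    apply csSup_le (hCne.image _)
    rintro v ⟨z, hz, rfl⟩
    have h1 : ‖a - z‖ ≤ ‖b - z‖ + ‖a - b‖ := by
      have : a - z = (b - z) + (a - b) := by abel
      rw [this]
      exact norm_add_le _ _
    have h2 := hFge b z hz
    simp only
    linarith
  set t : ℕ → ℝ := fun k => ε * (1/2)^(k+1) with ht_def
  set δ : ℕ → ℝ := fun k => ε * (1/16)^(k+1) with hδ_def
  set γ : ℕ → ℝ := fun m => 2 * (1/8)^(m+1) with hγ_def
  have ht : ∀ k, 0 < t k := fun k => by positivity
  have hδ : ∀ k, 0 < δ k := fun k => by positivity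
  have hγpos : ∀ k, 0 < γ k := fun k => by positivity
  -- step existence
  have hstep : ∀ (k : ℕ) (y : X), ∃ (z u : X) (f : X →L[ℝ] ℝ), z ∈ C ∧
      F y - δ k ≤ ‖y - z‖ - ‖z‖ ∧ ‖u‖ = 1 ∧ y - z = ‖y - z‖ • u ∧ f u = 1 ∧ ‖f‖ ≤ 1 := by
    intro k y
    obtain ⟨v, hv, hlt⟩ := exists_lt_of_lt_csSup (hCne.image _)
      (show F y - δ k < F y by linarith [hδ k])
    obtain ⟨z, hz, rfl⟩ := hv
    have hzgood : F y - δ k ≤ ‖y - z‖ - ‖z‖ := le_of_lt hlt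
    by_cases hyz : y - z = 0
    · obtain ⟨v0, hv0⟩ := exists_ne (0 : X)
      set u := ‖v0‖⁻¹ • v0 with hu_def
      have hu : ‖u‖ = 1 := by
        rw [hu_def, norm_smul, norm_inv, norm_norm, inv_mul_cancel₀ (norm_ne_zero_iff.2 hv0)]
      have hune : u ≠ 0 := by
        intro h; rw [h, norm_zero] at hu; linarith
      obtain ⟨f, hf1, hf2⟩ := exists_dual_vector ℝ u (norm_ne_zero_iff.2 hune)
      refine ⟨z, u, f, hz, hzgood, hu, ?_, ?_, le_of_eq hf1⟩
      · rw [hyz, norm_zero, zero_smul]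
      · rw [hf2, hu]; norm_num
    · set u := ‖y - z‖⁻¹ • (y - z) with hu_def
      have hnz : ‖y - z‖ ≠ 0 := norm_ne_zero_iff.2 hyz
      have hu : ‖u‖ = 1 := by
        rw [hu_def, norm_smul, norm_inv, norm_norm, inv_mul_cancel₀ hnz]
      have hune : u ≠ 0 := by
        intro h; rw [h, norm_zero] at hu; linarith
      obtain ⟨f, hf1, hf2⟩ := exists_dual_vector ℝ u (norm_ne_zero_iff.2 hune)
      refine ⟨z, u, f, hz, hzgood, hu, ?_, ?_, le_of_eq hf1⟩
      · rw [hu_def, smul_smul, mul_inv_cancel₀ hnz, one_smul]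
      · rw [hf2, hu]; norm_num
  choose zc uc fc hmemc hvalc hnormuc hcolc hfuc hnfc using hstep
  -- the sequence
  set xs : ℕ → X := fun k => Nat.rec x₀ (fun k xk => xk + t k • uc k xk) k with hxs_def
  have hxs0 : xs 0 = x₀ := rfl
  have hxs_succ : ∀ k, xs (k+1) = xs k + t k • uc k (xs k) := fun k => rfl
  set Z : ℕ → X := fun k => zc k (xs k) with hZ_def
  set U : ℕ → X := fun k => uc k (xs k) with hU_def
  set fN : ℕ → (X →L[ℝ] ℝ) := fun k => fc k (xs k) with hfN_def
  have hZC : ∀ k, Z k ∈ C := fun k => hmemc k (xs k)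
  have h1 : ∀ k, F (xs k) - δ k ≤ ‖xs k - Z k‖ - ‖Z k‖ := fun k => hvalc k (xs k)
  have hUnorm : ∀ k, ‖U k‖ = 1 := fun k => hnormuc k (xs k)
  have hcol : ∀ k, xs k - Z k = ‖xs k - Z k‖ • U k := fun k => hcolc k (xs k)
  have hfU : ∀ k, fN k (U k) = 1 := fun k => hfuc k (xs k)
  have hfn : ∀ k, ‖fN k‖ ≤ 1 := fun k => hnfc k (xs k)
  have hfle : ∀ k (y : X), fN k y ≤ ‖y‖ := by
    intro k y
    calc fN k y ≤ |fN k y| := le_abs_self _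
    _ ≤ ‖fN k‖ * ‖y‖ := (fN k).le_opNorm y
    _ ≤ 1 * ‖y‖ := mul_le_mul_of_nonneg_right (hfn k) (norm_nonneg y)
    _ = ‖y‖ := one_mul _
  -- basic recurrence facts
  have hstepF : ∀ k, F (xs k) + t k - δ k ≤ F (xs (k+1)) := by
    intro k
    have hxz : xs (k+1) - Z k = (‖xs k - Z k‖ + t k) • U k := by
      rw [hxs_succ k]
      have h' : xs k + t k • uc k (xs k) - Z k = (xs k - Z k) + t k • U k := by
        rw [hU_def]; abel
      rw [h', add_smul, ← hcol k]
    have hnorm1 : ‖xs (k+1) - Z k‖ = ‖xs k - Z k‖ + t k := by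
      rw [hxz, norm_smul, hUnorm k, mul_one, Real.norm_eq_abs,
        abs_of_nonneg (add_nonneg (norm_nonneg _) (ht k).le)]
    have h2 := hFge (xs (k+1)) (Z k) (hZC k)
    rw [hnorm1] at h2
    have h3 := h1 k
    linarith
  have hchain : ∀ m N, m ≤ N →
      F (xs m) + ∑ k ∈ Finset.Ico m N, (t k - δ k) ≤ F (xs N) := by
    intro m N hmN
    induction N, hmN using Nat.le_induction with
    | base => simp
    | succ N hmN ih =>
      rw [Finset.sum_Ico_succ_top hmN]
      have := hstepF N
      linarith
  have htele : ∀ m N, m ≤ N → xs N - xs m = ∑ k ∈ Finset.Ico m N, t k • U k := by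
    intro m N hmN
    induction N, hmN using Nat.le_induction with
    | base => simp
    | succ N hmN ih =>
      rw [Finset.sum_Ico_succ_top hmN, ← ih, hxs_succ N]
      rw [hU_def]
      abel
  have hts : ∀ m N, m ≤ N →
      (∑ k ∈ Finset.Ico m N, t k) + ε * (1/2)^N = ε * (1/2)^m := by
    intro m N hmN
    induction N, hmN using Nat.le_induction with
    | base => simp
    | succ N hmN ih =>
      rw [Finset.sum_Ico_succ_top hmN]
      have htN : t N = ε * (1/2)^(N+1) := rfl
      have hp : (1/2:ℝ)^(N+1) = (1/2)^N * (1/2) := pow_succ _ _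
      rw [htN, hp]
      linarith
  have hδs : ∀ m N, m ≤ N →
      (∑ k ∈ Finset.Ico m N, δ k) + 2 * δ N ≤ 2 * δ m := by
    intro m N hmN
    induction N, hmN using Nat.le_induction with
    | base => simp
    | succ N hmN ih =>
      rw [Finset.sum_Ico_succ_top hmN]
      have hδN : δ N = ε * (1/16)^(N+1) := rfl
      have hδN1 : δ (N+1) = ε * (1/16)^(N+1+1) := rfl
      have hp : (1/16:ℝ)^(N+1+1) = (1/16)^(N+1) * (1/16) := pow_succ _ _
      have hnn : (0:ℝ) ≤ ε * (1/16)^(N+1) := by positivity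
      rw [hδN1, hp]
      rw [hδN] at ih
      linarith
  -- convergence
  have hcauchy : CauchySeq xs := by
    apply cauchySeq_of_le_geometric (1/2) ε (by norm_num)
    intro n
    have h' : dist (xs n) (xs (n+1)) = t n := by
      rw [dist_eq_norm, norm_sub_rev, hxs_succ n]
      have h2 : xs n + t n • uc n (xs n) - xs n = t n • U n := by rw [hU_def]; abel
      rw [h2, norm_smul, hUnorm n, mul_one, Real.norm_eq_abs, abs_of_pos (ht n)]
    rw [h']
    have htN : t n = ε * (1/2)^(n+1) := rfl
    have hp : (1/2:ℝ)^(n+1) = (1/2)^n * (1/2) := pow_succ _ _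
    have hnn : (0:ℝ) ≤ ε * (1/2)^n := by positivity
    rw [htN, hp]
    linarith
  obtain ⟨x, hx⟩ := cauchySeq_tendsto_of_complete hcauchy
  have hxsdiff : ∀ m N, m ≤ N → ‖xs N - xs m‖ ≤ ε * (1/2)^m := by
    intro m N hmN
    rw [htele m N hmN]
    calc ‖∑ k ∈ Finset.Ico m N, t k • U k‖ ≤ ∑ k ∈ Finset.Ico m N, ‖t k • U k‖ :=
        norm_sum_le _ _
    _ = ∑ k ∈ Finset.Ico m N, t k := by
        apply Finset.sum_congr rfl
        intro k _
        rw [norm_smul, hUnorm k, mul_one, Real.norm_eq_abs, abs_of_pos (ht k)]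
    _ ≤ ε * (1/2)^m := by
        have := hts m N hmN
        have hnn : (0:ℝ) ≤ ε * (1/2)^N := by positivity
        linarith
  have hxdist : ∀ m, ‖x - xs m‖ ≤ ε * (1/2)^m := by
    intro m
    have ht2 : Tendsto (fun N => ‖xs N - xs m‖) atTop (𝓝 ‖x - xs m‖) :=
      ((hx.sub tendsto_const_nhds).norm)
    exact le_of_tendsto ht2 (eventually_atTop.2 ⟨m, fun N hN => hxsdiff m N hN⟩)
  have hxs0dist : ∀ m, ‖xs m - x₀‖ ≤ ε := by
    intro m
    have := hxsdiff 0 m (Nat.zero_le m)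
    rw [hxs0] at this
    simpa using this
  -- the key inequality
  have hkey : ∀ m N, m < N → 1 - γ m ≤ fN N (U m) := by
    intro m N hmN
    have hmN' : m ≤ N := hmN.le
    have hS1 := h1 N
    have hS2 := hchain m N hmN'
    have hS3 : ‖xs m - Z N‖ - ‖Z N‖ ≤ F (xs m) := hFge (xs m) (Z N) (hZC N)
    have hfval : fN N (xs N - Z N) = ‖xs N - Z N‖ := by
      conv_lhs => rw [hcol N]
      rw [map_smul, smul_eq_mul, hfU N, mul_one]
    have hsplit : xs m - Z N = (xs N - Z N) - (xs N - xs m) := by abel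
    have hfsum : fN N (xs N - xs m) = ∑ k ∈ Finset.Ico m N, t k * fN N (U k) := by
      rw [htele m N hmN', map_sum]
      apply Finset.sum_congr rfl
      intro k _
      rw [map_smul, smul_eq_mul]
    have hb : fN N (xs m - Z N) ≤ ‖xs m - Z N‖ := hfle N _
    have hbeq : fN N (xs m - Z N) = ‖xs N - Z N‖ - ∑ k ∈ Finset.Ico m N, t k * fN N (U k) := by
      rw [hsplit, map_sub, hfval, hfsum]
    have hsub1 : ∑ k ∈ Finset.Ico m N, (t k - δ k)
        = (∑ k ∈ Finset.Ico m N, t k) - ∑ k ∈ Finset.Ico m N, δ k :=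
      Finset.sum_sub_distrib _ _
    have hsub2 : ∑ k ∈ Finset.Ico m N, (t k - t k * fN N (U k))
        = (∑ k ∈ Finset.Ico m N, t k) - ∑ k ∈ Finset.Ico m N, t k * fN N (U k) :=
      Finset.sum_sub_distrib _ _
    have hsum_le : ∑ k ∈ Finset.Ico m N, (t k - t k * fN N (U k))
        ≤ (∑ k ∈ Finset.Ico m N, δ k) + δ N := by
      rw [hsub2]
      rw [hsub1] at hS2
      linarith
    have hterm : t m - t m * fN N (U m) ≤ ∑ k ∈ Finset.Ico m N, (t k - t k * fN N (U k)) := by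
      apply Finset.single_le_sum (f := fun k => t k - t k * fN N (U k))
      · intro k _
        have h5 : fN N (U k) ≤ 1 := by
          have := hfle N (U k)
          rw [hUnorm k] at this
          exact this
        nlinarith [ht k]
      · exact Finset.mem_Ico.2 ⟨le_refl m, hmN⟩
    have hδbound : (∑ k ∈ Finset.Ico m N, δ k) + δ N ≤ 2 * δ m := by
      have := hδs m N hmN'
      have := hδ N
      linarith
    have hfinal : t m - t m * fN N (U m) ≤ 2 * δ m :=
      le_trans hterm (le_trans hsum_le hδbound)
    have hprod : 2 * δ m = t m * γ m := by
      show 2 * (ε * (1/16)^(m+1)) = (ε * (1/2)^(m+1)) * (2 * (1/8)^(m+1))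
      rw [show ((1:ℝ)/16) = (1/2)*(1/8) by norm_num, mul_pow]
      ring
    rw [hprod] at hfinal
    have h6 : t m * (1 - fN N (U m)) ≤ t m * γ m := by
      rw [mul_one_sub]
      linarith
    have h7 := le_of_mul_le_mul_left h6 (ht m)
    linarith
  -- weak-* cluster point of the support functionals
  set Bset : Set (WeakDual ℝ X) := WeakDual.toStrongDual ⁻¹' Metric.closedBall 0 1 with hBset_def
  have hBcomp : IsCompact Bset := WeakDual.isCompact_closedBall 0 1
  set gseq : ℕ → WeakDual ℝ X := fun N => StrongDual.toWeakDual (fN N) with hgseq_def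
  have hgB : ∀ N, gseq N ∈ Bset := by
    intro N
    simp only [hBset_def, Set.mem_preimage, Metric.mem_closedBall, dist_zero_right]
    simpa [hgseq_def] using hfn N
  have hmap_le : Filter.map gseq atTop ≤ 𝓟 Bset :=
    Filter.le_principal_iff.2 (Filter.mem_map.2 (Filter.Eventually.of_forall hgB))
  obtain ⟨φ, hφB, hφcl⟩ := hBcomp.exists_clusterPt hmap_le
  have hφnorm : ‖WeakDual.toStrongDual φ‖ ≤ 1 := by
    simpa [hBset_def, dist_zero_right] using hφB
  have hφle : ∀ y : X, φ y ≤ ‖y‖ := by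
    intro y
    calc φ y ≤ |φ y| := le_abs_self _
    _ ≤ ‖WeakDual.toStrongDual φ‖ * ‖y‖ := (WeakDual.toStrongDual φ).le_opNorm y
    _ ≤ 1 * ‖y‖ := mul_le_mul_of_nonneg_right hφnorm (norm_nonneg y)
    _ = ‖y‖ := one_mul _
  have hφU : ∀ m, 1 - γ m ≤ φ (U m) := by
    intro m
    apply aux_cluster_mem (s := {ψ : WeakDual ℝ X | 1 - γ m ≤ ψ (U m)}) hφcl
    · exact isClosed_le continuous_const (WeakDual.eval_continuous (U m))
    · filter_upwards [eventually_ge_atTop (m+1)] with N hN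
      have h9 := hkey m N (lt_of_lt_of_le (Nat.lt_succ_self m) hN)
      exact h9
  -- alignment at the limit point
  set B : ℝ := ‖x₀‖ + ε + R with hB_def
  have hB0 : 0 < B := by positivity
  have hxmz : ∀ m, ‖xs m - Z m‖ ≤ B := by
    intro m
    have heq : xs m - Z m = (xs m - x₀) + (x₀ - Z m) := by abel
    have h2 := norm_add_le (xs m - x₀) (x₀ - Z m)
    have h3 := norm_sub_le x₀ (Z m)
    have h4 := hR (Z m) (hZC m)
    have h5 := hxs0dist m
    rw [← heq] at h2
    simp only [hB_def]
    linarith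
  set ρ : ℕ → ℝ := fun m => 2*(ε*(1/2)^m) + δ m + B*γ m with hρ_def
  have hρanti : ∀ m n, m ≤ n → ρ n ≤ ρ m := by
    intro m n hmn
    have p1 : ((1:ℝ)/2)^n ≤ (1/2)^m := pow_le_pow_of_le_one (by norm_num) (by norm_num) hmn
    have p2 : ((1:ℝ)/16)^(n+1) ≤ (1/16)^(m+1) :=
      pow_le_pow_of_le_one (by norm_num) (by norm_num) (by omega)
    have p3 : ((1:ℝ)/8)^(n+1) ≤ (1/8)^(m+1) :=
      pow_le_pow_of_le_one (by norm_num) (by norm_num) (by omega)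
    have hδmn : δ n ≤ δ m := by
      show ε * (1/16)^(n+1) ≤ ε * (1/16)^(m+1)
      exact mul_le_mul_of_nonneg_left p2 hε.le
    have hγmn : γ n ≤ γ m := by
      show 2 * ((1:ℝ)/8)^(n+1) ≤ 2 * (1/8)^(m+1)
      linarith
    have hBγ : B * γ n ≤ B * γ m := mul_le_mul_of_nonneg_left hγmn hB0.le
    simp only [hρ_def]
    nlinarith [hε.le]
  have hφmain : ∀ m, F x - ρ m ≤ φ (x - Z m) - ‖Z m‖ := by
    intro m
    have e1 : φ (x - Z m) = φ (xs m - Z m) + φ (x - xs m) := by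
      rw [← map_add]
      congr 1
      abel
    have e2 : φ (xs m - Z m) = ‖xs m - Z m‖ * φ (U m) := by
      conv_lhs => rw [hcol m]
      rw [map_smul, smul_eq_mul]
    have e3 : ‖xs m - Z m‖ * (1 - γ m) ≤ ‖xs m - Z m‖ * φ (U m) :=
      mul_le_mul_of_nonneg_left (hφU m) (norm_nonneg _)
    have e4 : ‖xs m - Z m‖ - B * γ m ≤ ‖xs m - Z m‖ * (1 - γ m) := by
      have h6 := hxmz m
      have h7 := (hγpos m).le
      nlinarith
    have e5 : -(ε * (1/2)^m) ≤ φ (x - xs m) := by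
      have h6 : φ (xs m - x) ≤ ‖xs m - x‖ := hφle _
      have h7 : φ (x - xs m) = - φ (xs m - x) := by
        rw [← map_neg]
        congr 1
        abel
      have h8 : ‖xs m - x‖ ≤ ε*(1/2)^m := by
        rw [norm_sub_rev]
        exact hxdist m
      linarith
    have e6 : F x ≤ F (xs m) + ε*(1/2)^m := le_trans (hFlip x (xs m)) (by linarith [hxdist m])
    have e7 := h1 m
    simp only [hρ_def]
    clear_value δ γ ρ B
    linarith only [e1, e2, e3, e4, e5, e6, e7]
  -- weak cluster point of the near-maximizers
  set ws : ℕ → WeakSpace ℝ X := fun N => toWeakSpace ℝ X (Z N) with hws_def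
  have hwmap_le : Filter.map ws atTop ≤ 𝓟 (toWeakSpace ℝ X '' C) :=
    Filter.le_principal_iff.2 (Filter.mem_map.2 (Filter.Eventually.of_forall
      (fun N => Set.mem_image_of_mem _ (hZC N))))
  obtain ⟨ζ, hζmem, hζcl⟩ := hCw.exists_clusterPt hwmap_le
  obtain ⟨z₀, hz₀C, hz₀eq⟩ := hζmem
  have hsymmζ : (toWeakSpace ℝ X).symm ζ = z₀ := by
    rw [← hz₀eq]
    exact LinearEquiv.symm_apply_apply _ _
  set φ' : X →L[ℝ] ℝ := WeakDual.toStrongDual φ with hφ'_def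
  have hφ'eq : ∀ y : X, φ' y = φ y := fun y => rfl
  have hζS : ∀ m, φ' ((toWeakSpace ℝ X).symm ζ) + ‖(toWeakSpace ℝ X).symm ζ‖
      ≤ φ' x - (F x - ρ m) := by
    intro m
    apply aux_cluster_mem
      (s := {w : WeakSpace ℝ X |
        φ' ((toWeakSpace ℝ X).symm w) + ‖(toWeakSpace ℝ X).symm w‖ ≤ φ' x - (F x - ρ m)}) hζcl
    · apply aux_sublevel_closed
      exact ((WeakBilin.eval_continuous _ φ').lowerSemicontinuous).add aux_norm_lsc
    · filter_upwards [eventually_ge_atTop m] with N hN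
      have h9 := hφmain N
      have h10 := hρanti m N hN
      have h11 : φ (x - Z N) = φ x - φ (Z N) := map_sub φ x (Z N)
      show φ' ((toWeakSpace ℝ X).symm (ws N)) + ‖(toWeakSpace ℝ X).symm (ws N)‖
        ≤ φ' x - (F x - ρ m)
      have hsy : (toWeakSpace ℝ X).symm (ws N) = Z N := LinearEquiv.symm_apply_apply _ _
      rw [hsy, hφ'eq (Z N), hφ'eq x]
      linarith
  have h12 : ∀ m, F x ≤ φ (x - z₀) - ‖z₀‖ + ρ m := by
    intro m
    have h13 := hζS m
    rw [hsymmζ, hφ'eq z₀, hφ'eq x] at h13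
    have h11 : φ (x - z₀) = φ x - φ z₀ := map_sub φ x z₀
    linarith
  have hρ0 : Tendsto ρ atTop (𝓝 0) := by
    have hhalf : Tendsto (fun m : ℕ => ((1:ℝ)/2)^m) atTop (𝓝 0) :=
      tendsto_pow_atTop_nhds_zero_of_lt_one (by norm_num) (by norm_num)
    apply squeeze_zero (fun m => ?_) (fun m => ?_)
      (show Tendsto (fun m : ℕ => (2*ε + ε + 2*B) * (1/2)^m) atTop (𝓝 0) by
        simpa using hhalf.const_mul (2*ε + ε + 2*B))
    · have := hδ m
      have h14 : (0:ℝ) ≤ B * γ m := le_of_lt (mul_pos hB0 (hγpos m))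
      have h15 : (0:ℝ) ≤ ε * (1/2)^m := by positivity
      have h16 : (0:ℝ) < δ m := hδ m
      simp only [hρ_def]
      clear_value δ γ ρ B
      linarith only [h14, h15, h16]
    · have p2 : ((1:ℝ)/16)^(m+1) ≤ (1/2)^m := by
        calc ((1:ℝ)/16)^(m+1) ≤ (1/16)^m :=
            pow_le_pow_of_le_one (by norm_num) (by norm_num) (Nat.le_succ m)
        _ ≤ (1/2)^m := pow_le_pow_left₀ (by norm_num) (by norm_num) m
      have p3' : ((1:ℝ)/8)^(m+1) ≤ (1/2)^m := by
        calc ((1:ℝ)/8)^(m+1) ≤ (1/8)^m :=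
            pow_le_pow_of_le_one (by norm_num) (by norm_num) (Nat.le_succ m)
        _ ≤ (1/2)^m := pow_le_pow_left₀ (by norm_num) (by norm_num) m
      have hδm : δ m ≤ ε * (1/2)^m := by
        show ε * (1/16)^(m+1) ≤ ε * (1/2)^m
        exact mul_le_mul_of_nonneg_left p2 hε.le
      have hγm : B * γ m ≤ 2*B*(1/2)^m := by
        show B * (2 * (1/8)^(m+1)) ≤ 2*B*(1/2)^m
        have h19 := mul_le_mul_of_nonneg_left p3' hB0.le
        linarith only [h19]
      have h17 : (2*ε+ε+2*B)*((1:ℝ)/2)^m = 2*(ε*(1/2)^m) + ε*(1/2)^m + 2*B*(1/2)^m := by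
        ring
      have h18 : 2*B*((1:ℝ)/8)^(m+1) ≤ 2*B*(1/2)^m := by
        have := mul_le_mul_of_nonneg_left p3' (by linarith [hB0.le] : (0:ℝ) ≤ 2*B)
        exact this
      simp only [hρ_def]
      rw [h17]
      linarith only [hδm, hγm, h18]
  have hattain : F x ≤ φ (x - z₀) - ‖z₀‖ := by
    have h16 : Tendsto (fun m => φ (x - z₀) - ‖z₀‖ + ρ m) atTop (𝓝 (φ (x - z₀) - ‖z₀‖ + 0)) :=
      tendsto_const_nhds.add hρ0
    rw [add_zero] at h16
    exact ge_of_tendsto h16 (Filter.Eventually.of_forall h12)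
  refine ⟨x, ?_, z₀, hz₀C, ?_⟩
  · have h17 := hxdist 0
    rw [hxs0] at h17
    simpa using h17
  · have h13 : φ (x - z₀) ≤ ‖x - z₀‖ := hφle _
    have h14 : ‖x - z₀‖ - ‖z₀‖ ≤ F x := hFge x z₀ hz₀C
    have h15 : F x ≤ ‖x - z₀‖ - ‖z₀‖ := by linarith
    exact (le_antisymm h14 h15).symm ▸ rfl


end key

/- STATEMENT 5: X a real Banach space, C a nonempty weakly compact subset of X. The set of
points x ∈ X such that z ↦ ‖x−z‖ − ‖z‖ attains its supremum on C is dense in X. -/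
theorem stmt_5 {X : Type*} [NormedAddCommGroup X] [NormedSpace ℝ X] [CompleteSpace X]
    (C : Set X) (hCne : C.Nonempty)
    (hCw : IsCompact (toWeakSpace ℝ X '' C)) :
    Dense {x : X | ∃ z₀ ∈ C,
      ‖x - z₀‖ - ‖z₀‖ = sSup ((fun z => ‖x - z‖ - ‖z‖) '' C)} := by
  rcases subsingleton_or_nontrivial X with hsub | hnt
  · have huniv : {x : X | ∃ z₀ ∈ C,
        ‖x - z₀‖ - ‖z₀‖ = sSup ((fun z => ‖x - z‖ - ‖z‖) '' C)} = Set.univ := by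
      apply Set.eq_univ_of_forall
      intro x
      obtain ⟨z₀, hz₀⟩ := hCne
      refine ⟨z₀, hz₀, ?_⟩
      have himg : ((fun z => ‖x - z‖ - ‖z‖) '' C) = {‖x - z₀‖ - ‖z₀‖} := by
        apply Set.eq_singleton_iff_unique_mem.2
        refine ⟨⟨z₀, hz₀, rfl⟩, ?_⟩
        rintro v ⟨z, hz, rfl⟩
        rw [Subsingleton.elim z z₀]
      rw [himg, csSup_singleton]
    rw [huniv]
    exact dense_univ
  · rw [Metric.dense_iff]
    intro x₀ r hr
    obtain ⟨x, hx, z₀, hz₀, heq⟩ := key_lemma C hCne hCw x₀ (r/2) (by linarith)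
    exact ⟨x, Metric.mem_ball.2 (by rw [dist_eq_norm]; linarith), z₀, hz₀, heq⟩
end

section
/- Let C = [0,1] ⊆ ℝ and for each integer k ≥ 1 define f_k : ℝ → ℝ by f_k(z) = 1/k if z ∈ {0,1} and f_k(z) = 0 otherwise. Then the sequence (f_k) converges uniformly to 0 on ℝ, and yet for every k ≥ 1 and every x ∈ ℝ the function z ↦ |x−z| − f_k(z) does not attain its supremum on [0,1]; that is, D([0,1], f_k) = ∅ for all k ≥ 1, while D([0,1], 0) = ℝ. -/
lemma aux_le (x w : ℝ) (hw : w ∈ Set.Icc (0:ℝ) 1) : |x - w| ≤ max |x| |x-1| := by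
  obtain ⟨h0, h1⟩ := hw
  have a1 : |x| ≤ max |x| |x-1| := le_max_left _ _
  have a2 : |x-1| ≤ max |x| |x-1| := le_max_right _ _
  have b1 : x ≤ |x| := le_abs_self x
  rw [abs_le]
  constructor <;> nlinarith [le_abs_self x, neg_abs_le (x-1), le_abs_self (x-1), neg_abs_le x]

lemma aux_lt (x z : ℝ) (h0 : 0 < z) (h1 : z < 1) : |x - z| < max |x| |x-1| := by
  rcases le_total x (1/2) with h | h
  · have : |x - z| < 1 - x := by
      rw [abs_lt]; constructor <;> linarith
    calc |x - z| < 1 - x := this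
      _ = -(x - 1) := by ring
      _ ≤ |x - 1| := neg_le_abs _
      _ ≤ _ := le_max_right _ _
  · have : |x - z| < x := by
      rw [abs_lt]; constructor <;> linarith
    calc |x - z| < x := this
      _ ≤ |x| := le_abs_self x
      _ ≤ _ := le_max_left _ _

theorem stmt_13 (f : ℕ → ℝ → ℝ)
    (hf : ∀ k z, f k z = if z = 0 ∨ z = 1 then 1 / (k : ℝ) else 0) :
    TendstoUniformly f (fun _ => 0) Filter.atTop ∧
    (∀ k : ℕ, 1 ≤ k →
      {x : ℝ | ∃ z ∈ Set.Icc (0 : ℝ) 1,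
        sSup ((fun w => |x - w| - f k w) '' Set.Icc (0 : ℝ) 1) = |x - z| - f k z} = ∅) ∧
    {x : ℝ | ∃ z ∈ Set.Icc (0 : ℝ) 1,
        sSup ((fun w => |x - w|) '' Set.Icc (0 : ℝ) 1) = |x - z|} = Set.univ := by
  refine ⟨?_, ?_, ?_⟩
  · -- uniform convergence
    rw [Metric.tendstoUniformly_iff]
    intro ε hε
    have h : Filter.Tendsto (fun k : ℕ => 1 / (k : ℝ)) Filter.atTop (nhds 0) :=
      tendsto_one_div_atTop_nhds_zero_nat
    have h2 : ∀ᶠ k : ℕ in Filter.atTop, 1 / (k : ℝ) < ε :=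
      h.eventually (Filter.Tendsto.eventually_lt_const hε Filter.tendsto_id)
    filter_upwards [h2] with k hk z
    have habs : |f k z| < ε := by
      rw [hf]
      split
      · rw [abs_of_nonneg (by positivity)]; exact hk
      · simpa using hε
    simpa [Real.dist_eq, abs_sub_comm] using habs
  · -- D([0,1], f_k) = ∅
    intro k hk
    ext x
    simp only [Set.mem_setOf_eq, Set.mem_empty_iff_false, iff_false]
    rintro ⟨z, hz, hattain⟩
    set M := max |x| |x - 1| with hM
    set S := (fun w => |x - w| - f k w) '' Set.Icc (0 : ℝ) 1 with hS
    have hfnn : ∀ w, 0 ≤ f k w := by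
      intro w; rw [hf]; split
      · positivity
      · exact le_refl 0
    have hub : ∀ y ∈ S, y ≤ M := by
      rintro y ⟨w, hw, rfl⟩
      have := aux_le x w hw
      have := hfnn w
      dsimp only
      linarith
    have hne : S.Nonempty := ⟨_, ⟨0, by norm_num, rfl⟩⟩
    have hbdd : BddAbove S := ⟨M, fun y hy => hub y hy⟩
    have hsup_le : sSup S ≤ M := csSup_le hne hub
    have hM_le : M ≤ sSup S := by
      rw [Real.le_sSup_iff hbdd hne]
      intro ε hε
      set t := min (-ε / 2) (1 / 2) with ht
      have ht0 : 0 < t := by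
        apply lt_min <;> linarith
      have ht1 : t < 1 := lt_of_le_of_lt (min_le_right _ _) (by norm_num)
      have htε : t < -ε := lt_of_le_of_lt (min_le_left _ _) (by linarith)
      rcases max_cases |x| |x - 1| with ⟨hMeq, _⟩ | ⟨hMeq, _⟩
      · refine ⟨|x - t| - f k t, ⟨t, ⟨le_of_lt ht0, le_of_lt ht1⟩, rfl⟩, ?_⟩
        have hft : f k t = 0 := by
          rw [hf]; rw [if_neg]; push_neg
          exact ⟨ne_of_gt ht0, ne_of_lt ht1⟩
        have : |x| - |t| ≤ |x - t| := abs_sub_abs_le_abs_sub x t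
        rw [abs_of_pos ht0] at this
        rw [hft, hM, hMeq]
        linarith
      · refine ⟨|x - (1 - t)| - f k (1 - t), ⟨1 - t, ⟨by linarith, by linarith⟩, rfl⟩, ?_⟩
        have hft : f k (1 - t) = 0 := by
          rw [hf]; rw [if_neg]; push_neg
          constructor <;> intro hc <;> [linarith; linarith]
        have h3 : |x - 1| - |(-t : ℝ)| ≤ |(x - 1) - (-t)| := abs_sub_abs_le_abs_sub (x - 1) (-t)
        have h4 : |(-t : ℝ)| = t := by rw [abs_neg, abs_of_pos ht0]
        have h5 : (x - 1) - (-t) = x - (1 - t) := by ring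
        rw [h4, h5] at h3
        rw [hft, hM, hMeq]
        linarith
    have hsup : sSup S = M := le_antisymm hsup_le hM_le
    rw [hS] at hattain
    rw [hsup] at hattain
    by_cases hz01 : z = 0 ∨ z = 1
    · have hfz : f k z = 1 / k := by rw [hf, if_pos hz01]
      have hk1 : (1 : ℝ) ≤ (k : ℝ) := by exact_mod_cast hk
      have hkpos : (0 : ℝ) < 1 / k := by positivity
      have hle := aux_le x z hz
      rw [hfz, hM] at hattain
      linarith
    · have hfz : f k z = 0 := by rw [hf, if_neg hz01]
      push_neg at hz01
      have h0 : 0 < z := lt_of_le_of_ne hz.1 (Ne.symm hz01.1)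
      have h1 : z < 1 := lt_of_le_of_ne hz.2 hz01.2
      have := aux_lt x z h0 h1
      rw [hfz, hM] at hattain
      linarith
  · -- D([0,1], 0) = univ
    ext x
    simp only [Set.mem_setOf_eq, Set.mem_univ, iff_true]
    have hmem : max |x| |x - 1| ∈ (fun w => |x - w|) '' Set.Icc (0 : ℝ) 1 := by
      rcases max_cases |x| |x - 1| with ⟨hMeq, _⟩ | ⟨hMeq, _⟩
      · exact ⟨0, by norm_num, by simp [hMeq]⟩
      · exact ⟨1, by norm_num, by simp [hMeq]⟩
    have hgr : IsGreatest ((fun w => |x - w|) '' Set.Icc (0 : ℝ) 1) (max |x| |x - 1|) := by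
      refine ⟨hmem, ?_⟩
      rintro y ⟨w, hw, rfl⟩
      exact aux_le x w hw
    have hsup := hgr.csSup_eq
    obtain ⟨w, hw, hweq⟩ := hmem
    exact ⟨w, hw, by rw [hsup]; simpa using hweq.symm⟩
end
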